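/- arXiv:2206.01323 — 2 statements merged into one kernel-verified Lean document; each statement's English description precedes it below -/
import Mathlib

section
/- For every positive natural number D, every invertible D×D real matrix A, and all D×D SPD matrices Z₁, Z₂, the matrices A·Z₁·Aᵀ and A·Z₂·Aᵀ are SPD and the AIRM distance is affine invariant: δ(A·Z₁·Aᵀ, A·Z₂·Aᵀ) = δ(Z₁, Z₂). -/
open MeasureTheory Matrix

variable {D : ℕ}

instance : MeasurableSpace (Matrix (Fin D) (Fin D) ℝ) :=
  (inferInstance : MeasurableSpace ((Fin D) → (Fin D) → ℝ))

/-- Apply a real function to the eigenvalues of a symmetric (Hermitian) real matrix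
via a spectral decomposition. For non-Hermitian input the map is the identity. -/
noncomputable def matFun (f : ℝ → ℝ) (Z : Matrix (Fin D) (Fin D) ℝ) :
    Matrix (Fin D) (Fin D) ℝ :=
  if h : Z.IsHermitian then
    (h.eigenvectorUnitary : Matrix (Fin D) (Fin D) ℝ) *
      Matrix.diagonal (fun i => f (h.eigenvalues i)) *
      star (h.eigenvectorUnitary : Matrix (Fin D) (Fin D) ℝ)
  else Z

/-- Matrix power `Z ^ s` for SPD `Z`: apply `t ↦ t ^ s` to the eigenvalues. -/
noncomputable def spdPow (Z : Matrix (Fin D) (Fin D) ℝ) (s : ℝ) :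
    Matrix (Fin D) (Fin D) ℝ :=
  matFun (fun t => Real.rpow t s) Z

/-- Matrix logarithm of an SPD matrix: apply `Real.log` to the eigenvalues. -/
noncomputable def spdLog (Z : Matrix (Fin D) (Fin D) ℝ) : Matrix (Fin D) (Fin D) ℝ :=
  matFun Real.log Z

/-- Matrix exponential of a real symmetric matrix: apply `Real.exp` to the eigenvalues. -/
noncomputable def symExp (S : Matrix (Fin D) (Fin D) ℝ) : Matrix (Fin D) (Fin D) ℝ :=
  matFun Real.exp S

/-- Frobenius norm. -/
noncomputable def frobNorm (A : Matrix (Fin D) (Fin D) ℝ) : ℝ :=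
  Real.sqrt (∑ i, ∑ j, (A i j) ^ 2)

/-- A real matrix is SPD if it is positive definite (hence symmetric). -/
def IsSPD (Z : Matrix (Fin D) (Fin D) ℝ) : Prop := Z.PosDef

/-- Affine-invariant Riemannian (AIRM) distance between SPD matrices. -/
noncomputable def airm (Z₁ Z₂ : Matrix (Fin D) (Fin D) ℝ) : ℝ :=
  frobNorm (spdLog (spdPow Z₁ (-(1:ℝ)/2) * Z₂ * spdPow Z₁ (-(1:ℝ)/2)))

/-- Weighted geometric mean `Z₁ #_γ Z₂`. -/
noncomputable def geoMean (Z₁ Z₂ : Matrix (Fin D) (Fin D) ℝ) (γ : ℝ) :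
    Matrix (Fin D) (Fin D) ℝ :=
  spdPow Z₁ ((1:ℝ)/2) *
    spdPow (spdPow Z₁ (-(1:ℝ)/2) * Z₂ * spdPow Z₁ (-(1:ℝ)/2)) γ *
    spdPow Z₁ ((1:ℝ)/2)

/-- `Gstar` is a Fréchet mean of the random SPD matrix `B`. -/
def IsFrechetMean {Ω : Type*} [MeasurableSpace Ω] (μ : Measure Ω)
    (B : Ω → Matrix (Fin D) (Fin D) ℝ) (Gstar : Matrix (Fin D) (Fin D) ℝ) : Prop :=
  IsSPD Gstar ∧
    ∀ Z : Matrix (Fin D) (Fin D) ℝ, IsSPD Z →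
      ∫ ω, airm Gstar (B ω) ^ 2 ∂μ ≤ ∫ ω, airm Z (B ω) ^ 2 ∂μ

section AuxProofs

variable {D : ℕ}

lemma contOn_spectrum (f : ℝ → ℝ) (Z : Matrix (Fin D) (Fin D) ℝ) :
    ContinuousOn f (spectrum ℝ Z) := by
  rw [continuousOn_iff_continuous_restrict]
  have : Finite (spectrum ℝ Z) := inferInstance
  exact continuous_of_discreteTopology

lemma transpose_eq_conjT (A : Matrix (Fin D) (Fin D) ℝ) : Aᵀ = Aᴴ :=
  (conjTranspose_eq_transpose_of_trivial A).symm

lemma posdef_conj {A Z : Matrix (Fin D) (Fin D) ℝ} (hA : IsUnit A) (hZ : Z.PosDef) :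
    (A * Z * Aᵀ).PosDef := by
  have h1 : (A * Z * Aᵀ).IsHermitian := by
    rw [transpose_eq_conjT]
    exact isHermitian_mul_mul_conjTranspose _ hZ.1
  refine Matrix.PosDef.of_dotProduct_mulVec_pos h1 (fun x hx => ?_)
  have hAT : IsUnit Aᵀ := by
    rw [Matrix.isUnit_iff_isUnit_det, Matrix.det_transpose,
      ← Matrix.isUnit_iff_isUnit_det]; exact hA
  have hy : Aᵀ *ᵥ x ≠ 0 := fun h => hx (mulVec_injective_iff_isUnit.mpr hAT (by simpa using h))
  have := hZ.dotProduct_mulVec_pos hy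
  calc (0:ℝ) < dotProduct (star (Aᵀ *ᵥ x)) (Z *ᵥ (Aᵀ *ᵥ x)) := this
  _ = dotProduct (star x) ((A * Z * Aᵀ) *ᵥ x) := by
      have hsx : star x = x := by simp
      have hsy : star (Aᵀ *ᵥ x) = Aᵀ *ᵥ x := by simp
      have hmv : (A * Z * Aᵀ) *ᵥ x = A *ᵥ (Z *ᵥ (Aᵀ *ᵥ x)) := by
        simp [Matrix.mulVec_mulVec, Matrix.mul_assoc]
      rw [hsx, hsy, hmv]
      conv_rhs => rw [Matrix.dotProduct_mulVec, ← Matrix.mulVec_transpose]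

lemma matFun_eq_cfc {Z : Matrix (Fin D) (Fin D) ℝ} (hZ : Z.IsHermitian) (f : ℝ → ℝ) :
    matFun f Z = cfc f Z := by
  rw [matFun, dif_pos hZ, hZ.cfc_eq f, Matrix.IsHermitian.cfc]
  congr 1

lemma spectrum_pos {Z : Matrix (Fin D) (Fin D) ℝ} (hZ : Z.PosDef) :
    ∀ x ∈ spectrum ℝ Z, 0 < x := by
  intro x hx
  rw [hZ.1.spectrum_real_eq_range_eigenvalues] at hx
  obtain ⟨i, rfl⟩ := hx
  exact hZ.eigenvalues_pos i

lemma cfc_pos_mul {Z : Matrix (Fin D) (Fin D) ℝ} (hZ : Z.PosDef) (f g h : ℝ → ℝ)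
    (hfg : ∀ t : ℝ, 0 < t → f t * g t = h t) :
    cfc f Z * cfc g Z = cfc h Z := by
  rw [← cfc_mul f g Z (contOn_spectrum f Z) (contOn_spectrum g Z)]
  exact cfc_congr fun x hx => hfg x (spectrum_pos hZ x hx)

/-- conjugation by an orthogonal matrix as a star algebra homomorphism -/
def conjSAH (U : Matrix (Fin D) (Fin D) ℝ) (h2 : Uᵀ * U = 1) :
    Matrix (Fin D) (Fin D) ℝ →⋆ₐ[ℝ] Matrix (Fin D) (Fin D) ℝ where
  toFun M := U * M * Uᵀ
  map_one' := by
    show U * 1 * Uᵀ = 1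
    rw [Matrix.mul_one, mul_eq_one_comm.mp h2]
  map_mul' M N := by
    simp only [Matrix.mul_assoc]
    conv_rhs => rw [← Matrix.mul_assoc Uᵀ U (N * Uᵀ), h2, Matrix.one_mul]
  map_zero' := by simp
  map_add' M N := by simp [Matrix.mul_add, Matrix.add_mul]
  commutes' r := by
    simp [Algebra.algebraMap_eq_smul_one, Matrix.mul_smul, Matrix.smul_mul,
      mul_eq_one_comm.mp h2]
  map_star' M := by
    simp [Matrix.star_eq_conjTranspose, conjTranspose_eq_transpose_of_trivial,
      Matrix.transpose_mul, Matrix.mul_assoc]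

lemma cfc_conj {U Z : Matrix (Fin D) (Fin D) ℝ} (h2 : Uᵀ * U = 1) (hZ : Z.IsHermitian)
    (f : ℝ → ℝ) : cfc f (U * Z * Uᵀ) = U * cfc f Z * Uᵀ := by
  have hcont : Continuous (conjSAH U h2) := by
    show Continuous fun M : Matrix (Fin D) (Fin D) ℝ => U * M * Uᵀ
    exact (continuous_const.matrix_mul continuous_id).matrix_mul continuous_const
  have hZ' : IsSelfAdjoint Z := hZ.isSelfAdjoint
  have hconj : IsSelfAdjoint (conjSAH U h2 Z) := by
    show IsSelfAdjoint (U * Z * Uᵀ)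
    have : (U * Z * Uᵀ).IsHermitian := by
      rw [transpose_eq_conjT U]
      exact isHermitian_mul_mul_conjTranspose _ hZ
    exact this.isSelfAdjoint
  exact (StarAlgHomClass.map_cfc (conjSAH U h2) f Z (contOn_spectrum f Z) hcont hZ' hconj).symm

lemma frobNorm_sq (A : Matrix (Fin D) (Fin D) ℝ) :
    ∑ i, ∑ j, (A i j) ^ 2 = (Aᵀ * A).trace := by
  rw [Matrix.trace]
  simp only [Matrix.diag_apply, Matrix.mul_apply, Matrix.transpose_apply, sq]
  exact Finset.sum_comm

lemma frobNorm_conj {U : Matrix (Fin D) (Fin D) ℝ} (B : Matrix (Fin D) (Fin D) ℝ)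
    (h2 : Uᵀ * U = 1) : frobNorm (U * B * Uᵀ) = frobNorm B := by
  unfold frobNorm
  rw [frobNorm_sq, frobNorm_sq]
  congr 1
  have hT : (U * B * Uᵀ)ᵀ = U * Bᵀ * Uᵀ := by
    simp [Matrix.transpose_mul, Matrix.mul_assoc]
  rw [hT]
  have : U * Bᵀ * Uᵀ * (U * B * Uᵀ) = U * (Bᵀ * B) * Uᵀ := by
    simp only [Matrix.mul_assoc]
    rw [← Matrix.mul_assoc Uᵀ U (B * Uᵀ), h2, Matrix.one_mul]
  rw [this, Matrix.trace_mul_comm, ← Matrix.mul_assoc, ← Matrix.mul_assoc, h2,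
    Matrix.one_mul]

lemma half_mul_half {Z : Matrix (Fin D) (Fin D) ℝ} (hZ : Z.PosDef) :
    cfc (fun t : ℝ => Real.rpow t ((1:ℝ)/2)) Z * cfc (fun t : ℝ => Real.rpow t ((1:ℝ)/2)) Z
      = Z := by
  have h := cfc_pos_mul hZ (fun t : ℝ => Real.rpow t ((1:ℝ)/2))
    (fun t : ℝ => Real.rpow t ((1:ℝ)/2)) (fun t : ℝ => t) ?_
  · rw [h, cfc_id' ℝ Z hZ.1.isSelfAdjoint]
  · intro t ht
    show t ^ ((1:ℝ)/2) * t ^ ((1:ℝ)/2) = t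
    rw [← Real.rpow_add ht]
    norm_num

lemma half_mul_neghalf {Z : Matrix (Fin D) (Fin D) ℝ} (hZ : Z.PosDef) :
    cfc (fun t : ℝ => Real.rpow t ((1:ℝ)/2)) Z * cfc (fun t : ℝ => Real.rpow t (-(1:ℝ)/2)) Z
      = 1 := by
  have h := cfc_pos_mul hZ (fun t : ℝ => Real.rpow t ((1:ℝ)/2))
    (fun t : ℝ => Real.rpow t (-(1:ℝ)/2)) (fun _ : ℝ => 1) ?_
  · rw [h, cfc_const_one ℝ Z hZ.1.isSelfAdjoint]
  · intro t ht
    show t ^ ((1:ℝ)/2) * t ^ (-(1:ℝ)/2) = 1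
    rw [← Real.rpow_add ht]
    norm_num

lemma neghalf_mul_half {Z : Matrix (Fin D) (Fin D) ℝ} (hZ : Z.PosDef) :
    cfc (fun t : ℝ => Real.rpow t (-(1:ℝ)/2)) Z * cfc (fun t : ℝ => Real.rpow t ((1:ℝ)/2)) Z
      = 1 := by
  have h := cfc_pos_mul hZ (fun t : ℝ => Real.rpow t (-(1:ℝ)/2))
    (fun t : ℝ => Real.rpow t ((1:ℝ)/2)) (fun _ : ℝ => 1) ?_
  · rw [h, cfc_const_one ℝ Z hZ.1.isSelfAdjoint]
  · intro t ht
    show t ^ (-(1:ℝ)/2) * t ^ ((1:ℝ)/2) = 1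
    rw [← Real.rpow_add ht]
    norm_num

lemma sandwich_one {Z : Matrix (Fin D) (Fin D) ℝ} (hZ : Z.PosDef) :
    cfc (fun t : ℝ => Real.rpow t (-(1:ℝ)/2)) Z * Z * cfc (fun t : ℝ => Real.rpow t (-(1:ℝ)/2)) Z
      = 1 := by
  nth_rewrite 2 [← cfc_id' ℝ Z hZ.1.isSelfAdjoint]
  have h1 := cfc_pos_mul hZ (fun t : ℝ => Real.rpow t (-(1:ℝ)/2)) (fun t : ℝ => t)
    (fun t : ℝ => Real.rpow t ((1:ℝ)/2)) ?_
  · rw [h1, half_mul_neghalf hZ]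
  · intro t ht
    show t ^ (-(1:ℝ)/2) * t = t ^ ((1:ℝ)/2)
    calc t ^ (-(1:ℝ)/2) * t = t ^ (-(1:ℝ)/2) * t ^ (1:ℝ) := by
          rw [Real.rpow_one]
      _ = t ^ (-(1:ℝ)/2 + 1) := (Real.rpow_add ht _ _).symm
      _ = t ^ ((1:ℝ)/2) := by norm_num

lemma cfc_herm {Z : Matrix (Fin D) (Fin D) ℝ} (f : ℝ → ℝ) :
    (cfc f Z).IsHermitian :=
  cfc_predicate f Z

lemma cfc_transpose {Z : Matrix (Fin D) (Fin D) ℝ} (f : ℝ → ℝ) :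
    (cfc f Z)ᵀ = cfc f Z := by
  rw [transpose_eq_conjT]
  exact cfc_herm f

end AuxProofs

/-- Affine invariance of the AIRM distance under congruence by an invertible matrix. -/
theorem airm_affine_invariant
    (D : ℕ) (hD : 0 < D) (A : Matrix (Fin D) (Fin D) ℝ) (hA : IsUnit A)
    (Z₁ Z₂ : Matrix (Fin D) (Fin D) ℝ) (hZ₁ : IsSPD Z₁) (hZ₂ : IsSPD Z₂) :
    IsSPD (A * Z₁ * Aᵀ) ∧ IsSPD (A * Z₂ * Aᵀ) ∧
      airm (A * Z₁ * Aᵀ) (A * Z₂ * Aᵀ) = airm Z₁ Z₂ := by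
  have hX : (A * Z₁ * Aᵀ).PosDef := posdef_conj hA hZ₁
  have hY : (A * Z₂ * Aᵀ).PosDef := posdef_conj hA hZ₂
  refine ⟨hX, hY, ?_⟩
  set e : ℝ → ℝ := fun t : ℝ => Real.rpow t (-(1:ℝ)/2) with he
  set q : ℝ → ℝ := fun t : ℝ => Real.rpow t ((1:ℝ)/2) with hq
  set P : Matrix (Fin D) (Fin D) ℝ := cfc e (A * Z₁ * Aᵀ) with hP
  set S : Matrix (Fin D) (Fin D) ℝ := cfc e Z₁ with hS
  set Q : Matrix (Fin D) (Fin D) ℝ := cfc q Z₁ with hQ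
  have hPow1 : spdPow (A * Z₁ * Aᵀ) (-(1:ℝ)/2) = P := matFun_eq_cfc hX.1 e
  have hPow2 : spdPow Z₁ (-(1:ℝ)/2) = S := matFun_eq_cfc hZ₁.1 e
  -- symmetry facts
  have hPt : Pᵀ = P := cfc_transpose e
  have hSt : Sᵀ = S := cfc_transpose e
  have hQt : Qᵀ = Q := cfc_transpose q
  -- algebraic facts
  have hQQ : Q * Q = Z₁ := half_mul_half hZ₁
  have hQS : Q * S = 1 := half_mul_neghalf hZ₁
  have hSQ : S * Q = 1 := neghalf_mul_half hZ₁
  have hPXP : P * (A * Z₁ * Aᵀ) * P = 1 := sandwich_one hX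
  -- the orthogonal matrix U
  set U : Matrix (Fin D) (Fin D) ℝ := P * A * Q with hU
  have hUt : Uᵀ = Q * Aᵀ * P := by
    rw [hU, Matrix.transpose_mul, Matrix.transpose_mul, hPt, hQt, Matrix.mul_assoc]
  have hUUt : U * Uᵀ = 1 := by
    rw [hU, hUt]
    calc P * A * Q * (Q * Aᵀ * P) = P * (A * (Q * Q * Aᵀ)) * P := by
          simp only [Matrix.mul_assoc]
      _ = P * (A * Z₁ * Aᵀ) * P := by rw [hQQ]; simp only [Matrix.mul_assoc]
      _ = 1 := hPXP
  have hUtU : Uᵀ * U = 1 := mul_eq_one_comm.mp hUUt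
  -- the inner matrix W
  set W : Matrix (Fin D) (Fin D) ℝ := S * Z₂ * S with hW
  have hWherm : W.IsHermitian := by
    rw [hW]
    nth_rewrite 2 [← hSt]
    rw [transpose_eq_conjT]
    exact isHermitian_mul_mul_conjTranspose _ hZ₂.1
  have hKey : U * W * Uᵀ = P * (A * Z₂ * Aᵀ) * P := by
    rw [hU, hUt, hW]
    calc P * A * Q * (S * Z₂ * S) * (Q * Aᵀ * P)
        = P * (A * (Q * S * (Z₂ * (S * Q * (Aᵀ * P))))) := by simp only [Matrix.mul_assoc]
      _ = P * (A * (Z₂ * (Aᵀ * P))) := by rw [hQS, hSQ, Matrix.one_mul, Matrix.one_mul]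
      _ = P * (A * Z₂ * Aᵀ) * P := by simp only [Matrix.mul_assoc]
  have hUWUherm : (U * W * Uᵀ).IsHermitian := by
    rw [transpose_eq_conjT U]
    exact isHermitian_mul_mul_conjTranspose _ hWherm
  -- put it all together
  unfold airm spdLog
  rw [hPow1, hPow2, ← hW, ← hKey]
  rw [matFun_eq_cfc hUWUherm Real.log, cfc_conj hUtU hWherm Real.log,
    matFun_eq_cfc hWherm Real.log]
  exact frobNorm_conj (cfc Real.log W) hUtU
end

section
/- For every positive natural number D, all D×D SPD matrices Z₁, Z₂, and every γ ∈ [0,1], the weighted geometric mean Z₁ #_γ Z₂ is a minimizer over all SPD matrices P of the weighted sum of squared AIRM distances (1−γ)·δ(P, Z₁)² + γ·δ(P, Z₂)². In particular, for γ = 1/2 it minimizes P ↦ (1/2)(δ(P, Z₁)² + δ(P, Z₂)²), i.e., it is the Fréchet mean of the two points. -/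
open MeasureTheory

variable {D : ℕ}

namespace SPDFM

open Matrix Polynomial

variable {D : ℕ}



theorem two_log_le {u : ℝ} (hu : 1 ≤ u) : 2 * Real.log u ≤ u - u⁻¹ := by
  set f : ℝ → ℝ := fun x => x - x⁻¹ - 2 * Real.log x with hf
  have hsub : Set.Ici (1:ℝ) ⊆ {x : ℝ | x ≠ 0} := by
    intro x hx
    have : (1:ℝ) ≤ x := hx
    simp only [Set.mem_setOf_eq]
    intro h; rw [h] at this; linarith
  have hderiv : ∀ x ∈ interior (Set.Ici (1:ℝ)), HasDerivAt f (1 - -(x^2)⁻¹ - 2 * x⁻¹) x := by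
    intro x hx
    rw [interior_Ici, Set.mem_Ioi] at hx
    have hx0 : x ≠ 0 := by intro h; rw [h] at hx; linarith
    exact ((hasDerivAt_id x).sub (hasDerivAt_inv hx0)).sub
      ((Real.hasDerivAt_log hx0).const_mul 2)
  have hmono : MonotoneOn f (Set.Ici 1) := by
    apply monotoneOn_of_deriv_nonneg (convex_Ici 1)
    · apply ContinuousOn.sub
      · exact (continuousOn_id).sub (continuousOn_inv₀.mono hsub)
      · exact (Real.continuousOn_log.mono hsub).const_smul 2 |>.congr (fun x _ => by
          simp [smul_eq_mul])
    · intro x hx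
      exact (hderiv x hx).differentiableAt.differentiableWithinAt
    · intro x hx
      rw [(hderiv x hx).deriv]
      rw [interior_Ici, Set.mem_Ioi] at hx
      have hx0 : (0:ℝ) < x := by linarith
      have h1 : (0:ℝ) ≤ (1 - x⁻¹)^2 := sq_nonneg _
      have h2 : x⁻¹ * x = 1 := inv_mul_cancel₀ (ne_of_gt hx0)
      have h3 : (x^2)⁻¹ = x⁻¹ * x⁻¹ := by rw [sq, mul_inv]
      nlinarith [h1, h2, h3]
  have h1 : f 1 ≤ f u := hmono (by simp) (by simpa using hu) hu
  have : f 1 = 0 := by simp [hf]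
  rw [this] at h1
  simp only [hf] at h1
  linarith

theorem sq_le_exp_add (t : ℝ) : t^2 ≤ Real.exp t + Real.exp (-t) - 2 := by
  have H : ∀ s : ℝ, 0 ≤ s → s^2 ≤ Real.exp s + Real.exp (-s) - 2 := by
    intro s hs
    set u := Real.exp (s/2) with hu
    have hu1 : 1 ≤ u := Real.one_le_exp (by linarith)
    have hu0 : (0:ℝ) < u := lt_of_lt_of_le one_pos hu1
    have hlog : Real.log u = s/2 := Real.log_exp _
    have h2 : 2 * Real.log u ≤ u - u⁻¹ := two_log_le hu1
    have hs' : s ≤ u - u⁻¹ := by rw [hlog] at h2; linarith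
    have hnn : 0 ≤ u - u⁻¹ := le_trans hs hs'
    have hsq : s^2 ≤ (u - u⁻¹)^2 := by nlinarith
    have hexp : Real.exp s = u * u := by
      rw [hu, ← Real.exp_add]; congr 1; ring
    have hexpn : Real.exp (-s) = u⁻¹ * u⁻¹ := by
      rw [Real.exp_neg, hexp, mul_inv]
    have huu : u * u⁻¹ = 1 := mul_inv_cancel₀ (ne_of_gt hu0)
    have hfin : (u - u⁻¹)^2 = Real.exp s + Real.exp (-s) - 2 := by
      rw [hexp, hexpn]; nlinarith [huu]
    linarith [hfin ▸ hsq]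
  rcases le_total 0 t with h | h
  · exact H t h
  · have h2 := H (-t) (by linarith)
    rw [neg_neg] at h2
    calc t^2 = (-t)^2 := by ring
    _ ≤ Real.exp (-t) + Real.exp t - 2 := h2
    _ = Real.exp t + Real.exp (-t) - 2 := by ring

theorem exp_add_sub_two_le {t : ℝ} (ht : 0 ≤ t) :
    Real.exp t + Real.exp (-t) - 2 ≤ t^2 * Real.exp t := by
  set x := Real.exp t with hx
  have hx1 : 1 ≤ x := Real.one_le_exp ht
  have hx0 : (0:ℝ) < x := lt_of_lt_of_le one_pos hx1
  have hinv : Real.exp (-t) = x⁻¹ := by rw [Real.exp_neg]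
  have hlogx : Real.log x = t := Real.log_exp _
  have hxinv : x * x⁻¹ = 1 := mul_inv_cancel₀ (ne_of_gt hx0)
  have key : x - 1 ≤ x * t := by
    have h1 : Real.log x⁻¹ ≤ x⁻¹ - 1 := Real.log_le_sub_one_of_pos (by positivity)
    rw [Real.log_inv, hlogx] at h1
    nlinarith [h1, hxinv]
  have hsq : (x - 1)^2 ≤ (x * t)^2 := by
    have h0 : 0 ≤ x - 1 := by linarith
    nlinarith [h0, key]
  rw [hinv]
  have h3 : x * (x + x⁻¹ - 2) ≤ x * (t^2 * x) := by nlinarith [hsq, hxinv]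
  exact le_of_mul_le_mul_left h3 hx0

theorem exp_add_sub_two_le' (t : ℝ) :
    Real.exp t + Real.exp (-t) - 2 ≤ t^2 * Real.exp |t| := by
  rcases le_total 0 t with h | h
  · rw [abs_of_nonneg h]; exact exp_add_sub_two_le h
  · rw [abs_of_nonpos h]
    have h2 := exp_add_sub_two_le (t := -t) (by linarith)
    rw [neg_neg] at h2
    calc Real.exp t + Real.exp (-t) - 2 = Real.exp (-t) + Real.exp t - 2 := by ring
    _ ≤ (-t)^2 * Real.exp (-t) := h2
    _ = t^2 * Real.exp (-t) := by ring





/-- `Z = V * diagonal d * Vᴴ` with `V` unitary. -/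
def IsRep (Z : Matrix (Fin D) (Fin D) ℝ) (V : Matrix.unitaryGroup (Fin D) ℝ)
    (d : Fin D → ℝ) : Prop :=
  Z = (V : Matrix (Fin D) (Fin D) ℝ) * Matrix.diagonal d * star (V : Matrix (Fin D) (Fin D) ℝ)

theorem umul (V : Matrix.unitaryGroup (Fin D) ℝ) :
    (V : Matrix (Fin D) (Fin D) ℝ) * star (V : Matrix (Fin D) (Fin D) ℝ) = 1 :=
  Matrix.mem_unitaryGroup_iff.mp V.2

theorem umul' (V : Matrix.unitaryGroup (Fin D) ℝ) :
    star (V : Matrix (Fin D) (Fin D) ℝ) * (V : Matrix (Fin D) (Fin D) ℝ) = 1 :=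
  Matrix.mem_unitaryGroup_iff'.mp V.2

theorem IsRep.isHermitian {Z : Matrix (Fin D) (Fin D) ℝ} {V d} (h : IsRep Z V d) :
    Z.IsHermitian := by
  rw [Matrix.IsHermitian, h]
  simp only [Matrix.star_eq_conjTranspose, Matrix.conjTranspose_mul,
    Matrix.conjTranspose_conjTranspose, Matrix.diagonal_conjTranspose]
  rw [show star d = d from by funext i; simp, Matrix.mul_assoc]

theorem IsRep.spectral {Z : Matrix (Fin D) (Fin D) ℝ} (h : Z.IsHermitian) :
    IsRep Z h.eigenvectorUnitary h.eigenvalues := by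
  have := h.spectral_theorem
  rwa [show RCLike.ofReal ∘ h.eigenvalues = h.eigenvalues from by
    funext i; simp [RCLike.ofReal_real_eq_id]] at this

theorem cancel_left {P Q : Matrix (Fin D) (Fin D) ℝ} (h : P * Q = 1)
    (T : Matrix (Fin D) (Fin D) ℝ) : P * (Q * T) = T := by
  rw [← Matrix.mul_assoc, h, Matrix.one_mul]

theorem IsRep.mul {Z W : Matrix (Fin D) (Fin D) ℝ} {V d e} (hZ : IsRep Z V d)
    (hW : IsRep W V e) : IsRep (Z * W) V (fun i => d i * e i) := by
  rw [IsRep, hZ, hW, ← Matrix.diagonal_mul_diagonal]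
  simp only [Matrix.mul_assoc]
  rw [cancel_left (umul' V)]

theorem IsRep.one (V : Matrix.unitaryGroup (Fin D) ℝ) :
    IsRep (1 : Matrix (Fin D) (Fin D) ℝ) V (fun _ => 1) := by
  rw [IsRep, show Matrix.diagonal (fun _ : Fin D => (1:ℝ)) = 1 from Matrix.diagonal_one,
    Matrix.mul_one, umul V]

theorem rep_eq_rep {A B : Matrix (Fin D) (Fin D) ℝ} {V a b} (h1 : IsRep A V a)
    (h2 : IsRep B V b) (hab : ∀ i, a i = b i) : A = B := by
  rw [h1, h2, show a = b from funext hab]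

/-- Conjugation `A ↦ P * A * Q` as an algebra homomorphism, when `P * Q = 1`. -/
noncomputable def conjHom (P Q : Matrix (Fin D) (Fin D) ℝ) (hPQ : P * Q = 1) :
    Matrix (Fin D) (Fin D) ℝ →ₐ[ℝ] Matrix (Fin D) (Fin D) ℝ where
  toFun A := P * A * Q
  map_one' := by show P * 1 * Q = 1; rw [Matrix.mul_one, hPQ]
  map_mul' A B := by
    have hQP : Q * P = 1 := mul_eq_one_comm.mp hPQ
    show P * (A * B) * Q = P * A * Q * (P * B * Q)
    have h1 : P * A * Q * (P * B * Q) = P * A * (Q * P) * (B * Q) := by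
      simp only [Matrix.mul_assoc]
    rw [h1, hQP, Matrix.mul_one]
    simp only [Matrix.mul_assoc]
  map_zero' := by simp
  map_add' A B := by simp [Matrix.mul_add, Matrix.add_mul]
  commutes' r := by
    simp only [Algebra.algebraMap_eq_smul_one]
    rw [Matrix.mul_smul, Matrix.mul_one, Matrix.smul_mul, hPQ]

theorem aeval_conj {P Q A : Matrix (Fin D) (Fin D) ℝ} (hPQ : P * Q = 1) (p : ℝ[X]) :
    aeval (P * A * Q) p = P * aeval A p * Q :=
  aeval_algHom_apply (conjHom P Q hPQ) A p

theorem aeval_diagonal (c : Fin D → ℝ) (p : ℝ[X]) :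
    aeval (Matrix.diagonal c) p = Matrix.diagonal (fun i => p.eval (c i)) := by
  have h1 := aeval_algHom_apply (Matrix.diagonalAlgHom (α := ℝ) ℝ) c p
  rw [Matrix.diagonalAlgHom_apply] at h1
  have h3 : (aeval c p : Fin D → ℝ) = fun i => p.eval (c i) := by
    funext i
    have h2 := aeval_algHom_apply (Pi.evalAlgHom ℝ (fun _ : Fin D => ℝ) i) c p
    simp only [Pi.evalAlgHom_apply] at h2
    rw [← h2]
    exact congrFun (Polynomial.coe_aeval_eq_eval (c i)) p
  rw [h1, h3, Matrix.diagonalAlgHom_apply]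

theorem charpoly_conj {P Q A : Matrix (Fin D) (Fin D) ℝ} (hPQ : P * Q = 1) :
    (P * A * Q).charpoly = A.charpoly := by
  have hcm : charmatrix (P * A * Q) =
      (C : ℝ →+* ℝ[X]).mapMatrix P * charmatrix A * (C : ℝ →+* ℝ[X]).mapMatrix Q := by
    rw [charmatrix, charmatrix, Matrix.mul_sub, Matrix.sub_mul]
    congr 1
    · have hc : Commute ((Matrix.scalar (Fin D)) (X : ℝ[X]))
          ((C : ℝ →+* ℝ[X]).mapMatrix P) :=
        Matrix.scalar_commute _ (fun r' => Commute.all _ _) _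
      rw [← hc.eq, Matrix.mul_assoc, ← _root_.map_mul ((C : ℝ →+* ℝ[X]).mapMatrix) P Q,
        hPQ, _root_.map_one, Matrix.mul_one]
    · rw [_root_.map_mul ((C : ℝ →+* ℝ[X]).mapMatrix) (P * A) Q,
        _root_.map_mul ((C : ℝ →+* ℝ[X]).mapMatrix) P A]
  rw [Matrix.charpoly, Matrix.charpoly, hcm, Matrix.det_mul, Matrix.det_mul]
  have h2 : ((C : ℝ →+* ℝ[X]).mapMatrix P).det * ((C : ℝ →+* ℝ[X]).mapMatrix Q).det = 1 := by
    rw [← Matrix.det_mul, ← _root_.map_mul ((C : ℝ →+* ℝ[X]).mapMatrix) P Q, hPQ,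
      _root_.map_one, Matrix.det_one]
  calc ((C : ℝ →+* ℝ[X]).mapMatrix P).det * (charmatrix A).det *
        ((C : ℝ →+* ℝ[X]).mapMatrix Q).det
      = ((C : ℝ →+* ℝ[X]).mapMatrix P).det * ((C : ℝ →+* ℝ[X]).mapMatrix Q).det *
        (charmatrix A).det := by ring
    _ = (charmatrix A).det := by rw [h2, one_mul]

theorem charpoly_diagonal (d : Fin D → ℝ) :
    (Matrix.diagonal d).charpoly = ∏ i, (X - C (d i)) := by
  have h : charmatrix (Matrix.diagonal d) = Matrix.diagonal (fun i => X - C (d i)) := by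
    ext i j
    by_cases h : i = j
    · subst h; simp
    · rw [charmatrix_apply_ne _ _ _ h, Matrix.diagonal_apply_ne _ h,
        Matrix.diagonal_apply_ne _ h, map_zero, neg_zero]
  rw [Matrix.charpoly, h, Matrix.det_diagonal]

theorem IsRep.charpoly {Z : Matrix (Fin D) (Fin D) ℝ} {V d} (h : IsRep Z V d) :
    Z.charpoly = ∏ i, (X - C (d i)) := by
  rw [h, charpoly_conj (umul V), charpoly_diagonal]

theorem IsRep.eig_multiset {Z Z' : Matrix (Fin D) (Fin D) ℝ} {V V' a b}
    (h1 : IsRep Z V a) (h2 : IsRep Z' V' b) (hc : Z'.charpoly = Z.charpoly) :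
    Multiset.map b Finset.univ.val = Multiset.map a Finset.univ.val := by
  have e1 : (∏ i, (X - C (a i))) = ∏ i, (X - C (b i)) := by
    rw [← h1.charpoly, ← h2.charpoly, hc]
  have key : ∀ g : Fin D → ℝ, (∏ i, (X - C (g i))).roots = Multiset.map g Finset.univ.val := by
    intro g
    rw [Finset.prod_eq_multiset_prod]
    have : Multiset.map (fun i => X - C (g i)) Finset.univ.val =
        Multiset.map (fun r => X - C r) (Multiset.map g Finset.univ.val) := by
      rw [Multiset.map_map]; rfl
    rw [this, Polynomial.roots_multiset_prod_X_sub_C]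
  have := congrArg Polynomial.roots e1
  rw [key a, key b] at this
  exact this.symm

theorem IsRep.sum_f_eq {Z Z' : Matrix (Fin D) (Fin D) ℝ} {V V' a b}
    (h1 : IsRep Z V a) (h2 : IsRep Z' V' b) (hc : Z'.charpoly = Z.charpoly) (f : ℝ → ℝ) :
    ∑ i, f (b i) = ∑ i, f (a i) := by
  have hms := h1.eig_multiset h2 hc
  rw [Finset.sum_eq_multiset_sum, Finset.sum_eq_multiset_sum]
  have e1 : Multiset.map (fun i => f (b i)) Finset.univ.val =
      Multiset.map f (Multiset.map b Finset.univ.val) := by rw [Multiset.map_map]; rfl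
  have e2 : Multiset.map (fun i => f (a i)) Finset.univ.val =
      Multiset.map f (Multiset.map a Finset.univ.val) := by rw [Multiset.map_map]; rfl
  rw [e1, e2, hms]





theorem matFun_eq {Z : Matrix (Fin D) (Fin D) ℝ} (hherm : Z.IsHermitian) (f : ℝ → ℝ) :
    matFun f Z = (hherm.eigenvectorUnitary : Matrix (Fin D) (Fin D) ℝ) *
      Matrix.diagonal (fun i => f (hherm.eigenvalues i)) *
      star (hherm.eigenvectorUnitary : Matrix (Fin D) (Fin D) ℝ) := by
  unfold matFun
  rw [dif_pos hherm]

theorem matFun_rep {Z : Matrix (Fin D) (Fin D) ℝ} {V d} (hrep : IsRep Z V d) (f : ℝ → ℝ) :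
    IsRep (matFun f Z) V (fun i => f (d i)) := by
  have hherm := hrep.isHermitian
  have hrepU : IsRep Z hherm.eigenvectorUnitary hherm.eigenvalues := IsRep.spectral hherm
  set U := hherm.eigenvectorUnitary with hU
  set e := hherm.eigenvalues with he
  have hms : Multiset.map e Finset.univ.val = Multiset.map d Finset.univ.val :=
    hrep.eig_multiset hrepU rfl
  set S : Finset ℝ := Finset.univ.image d with hS
  have hdS : ∀ i, d i ∈ S := fun i => Finset.mem_image_of_mem d (Finset.mem_univ i)
  have heS : ∀ i, e i ∈ S := by
    intro i
    have h1 : e i ∈ Multiset.map e Finset.univ.val := by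
      apply Multiset.mem_map_of_mem
      simp
    rw [hms] at h1
    obtain ⟨j, _, hj⟩ := Multiset.mem_map.mp h1
    rw [← hj]; exact hdS j
  set p : ℝ[X] := Lagrange.interpolate S id f with hp
  have hpeval : ∀ x ∈ S, p.eval x = f x := by
    intro x hx
    have := Lagrange.eval_interpolate_at_node (s := S) (v := id) f (Set.injOn_id _) hx
    simpa [hp] using this
  have key : ∀ (W : Matrix.unitaryGroup (Fin D) ℝ) (c : Fin D → ℝ), IsRep Z W c →
      (∀ i, p.eval (c i) = f (c i)) →
      aeval Z p = (W : Matrix (Fin D) (Fin D) ℝ) * Matrix.diagonal (fun i => f (c i)) *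
        star (W : Matrix (Fin D) (Fin D) ℝ) := by
    intro W c hrepW hev
    conv_lhs => rw [hrepW]
    rw [aeval_conj (umul W), aeval_diagonal,
      show (fun i => p.eval (c i)) = fun i => f (c i) from funext hev]
  rw [IsRep]
  calc matFun f Z
      = (U : Matrix (Fin D) (Fin D) ℝ) * Matrix.diagonal (fun i => f (e i)) *
        star (U : Matrix (Fin D) (Fin D) ℝ) := matFun_eq hherm f
    _ = aeval Z p := (key U e hrepU (fun i => hpeval _ (heS i))).symm
    _ = (V : Matrix (Fin D) (Fin D) ℝ) * Matrix.diagonal (fun i => f (d i)) *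
        star (V : Matrix (Fin D) (Fin D) ℝ) := key V d hrep (fun i => hpeval _ (hdS i))

theorem IsRep.spdPow {Z : Matrix (Fin D) (Fin D) ℝ} {V d} (hrep : IsRep Z V d) (s : ℝ) :
    IsRep (spdPow Z s) V (fun i => (d i) ^ s) := matFun_rep hrep _

theorem IsRep.spdLog {Z : Matrix (Fin D) (Fin D) ℝ} {V d} (hrep : IsRep Z V d) :
    IsRep (spdLog Z) V (fun i => Real.log (d i)) := matFun_rep hrep _

/-- Positive definiteness from a representation with positive diagonal. -/
theorem IsRep.posDef {Z : Matrix (Fin D) (Fin D) ℝ} {V d} (hrep : IsRep Z V d)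
    (hd : ∀ i, 0 < d i) : Z.PosDef := by
  refine Matrix.PosDef.of_dotProduct_mulVec_pos hrep.isHermitian (fun x hx => ?_)
  have hdiag : (Matrix.diagonal d).PosDef := Matrix.PosDef.diagonal hd
  set y := star (V : Matrix (Fin D) (Fin D) ℝ) *ᵥ x with hy
  have hyx : (V : Matrix (Fin D) (Fin D) ℝ) *ᵥ y = x := by
    rw [hy, Matrix.mulVec_mulVec, umul V, Matrix.one_mulVec]
  have hy0 : y ≠ 0 := by
    intro h
    rw [h, Matrix.mulVec_zero] at hyx
    exact hx hyx.symm
  have hrw : star x ⬝ᵥ (Z *ᵥ x) = star y ⬝ᵥ (Matrix.diagonal d *ᵥ y) := by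
    rw [hrep]
    rw [show ((V : Matrix (Fin D) (Fin D) ℝ) * Matrix.diagonal d *
        star (V : Matrix (Fin D) (Fin D) ℝ)) *ᵥ x =
        (V : Matrix (Fin D) (Fin D) ℝ) *ᵥ (Matrix.diagonal d *ᵥ y) from by
      rw [Matrix.mulVec_mulVec, Matrix.mulVec_mulVec]]
    rw [Matrix.dotProduct_mulVec, show star x ᵥ* (V : Matrix (Fin D) (Fin D) ℝ) = star y from by
      rw [hy, Matrix.star_mulVec, Matrix.star_eq_conjTranspose,
        Matrix.conjTranspose_conjTranspose]]
  rw [hrw]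
  exact hdiag.dotProduct_mulVec_pos hy0

/-- Conjugation of a positive definite matrix by a positive definite matrix. -/
theorem posDef_conj {A C : Matrix (Fin D) (Fin D) ℝ} (hA : A.PosDef) (hC : C.PosDef) :
    (C * A * C).PosDef := by
  have hCH : Cᴴ = C := hC.1
  have hAH : Aᴴ = A := hA.1
  refine Matrix.PosDef.of_dotProduct_mulVec_pos ?_ ?_
  · show (C * A * C)ᴴ = C * A * C
    rw [Matrix.conjTranspose_mul, Matrix.conjTranspose_mul, hCH, hAH, Matrix.mul_assoc]
  · intro x hx
    set y := C *ᵥ x with hy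
    have hy0 : y ≠ 0 := by
      intro h
      have h2 := hC.dotProduct_mulVec_pos hx
      rw [show star x ⬝ᵥ (C *ᵥ x) = 0 from by rw [← hy, h, dotProduct_zero]] at h2
      exact lt_irrefl _ h2
    have hrw : star x ⬝ᵥ ((C * A * C) *ᵥ x) = star y ⬝ᵥ (A *ᵥ y) := by
      rw [show (C * A * C) *ᵥ x = C *ᵥ (A *ᵥ y) from by
        rw [hy, Matrix.mulVec_mulVec, Matrix.mulVec_mulVec]]
      rw [Matrix.dotProduct_mulVec, show star x ᵥ* C = star y from by
        rw [hy, Matrix.star_mulVec, hCH]]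
    rw [hrw]
    exact hA.dotProduct_mulVec_pos hy0

theorem PosDef.rep {Z : Matrix (Fin D) (Fin D) ℝ} (hZ : Z.PosDef) :
    IsRep Z hZ.1.eigenvectorUnitary hZ.1.eigenvalues := IsRep.spectral hZ.1


theorem spdPow_add {Z : Matrix (Fin D) (Fin D) ℝ} (hZ : Z.PosDef) (s t : ℝ) :
    spdPow Z s * spdPow Z t = spdPow Z (s + t) := by
  have hrep := PosDef.rep hZ
  exact rep_eq_rep ((hrep.spdPow s).mul (hrep.spdPow t)) (hrep.spdPow (s + t))
    (fun i => (Real.rpow_add (hZ.eigenvalues_pos i) s t).symm)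

theorem spdPow_zero' {Z : Matrix (Fin D) (Fin D) ℝ} (hZ : Z.PosDef) : spdPow Z 0 = 1 :=
  rep_eq_rep ((PosDef.rep hZ).spdPow 0) (IsRep.one _) (fun i => Real.rpow_zero _)

theorem spdPow_one' {Z : Matrix (Fin D) (Fin D) ℝ} (hZ : Z.PosDef) : spdPow Z 1 = Z :=
  rep_eq_rep ((PosDef.rep hZ).spdPow 1) (PosDef.rep hZ) (fun i => Real.rpow_one _)

theorem spdPow_posDef {Z : Matrix (Fin D) (Fin D) ℝ} (hZ : Z.PosDef) (s : ℝ) :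
    (spdPow Z s).PosDef :=
  ((PosDef.rep hZ).spdPow s).posDef
    (fun i => Real.rpow_pos_of_pos (hZ.eigenvalues_pos i) s)

theorem spdPow_mul_base_mul {Z : Matrix (Fin D) (Fin D) ℝ} (hZ : Z.PosDef) (s t : ℝ) :
    spdPow Z s * Z * spdPow Z t = spdPow Z (s + 1 + t) := by
  calc spdPow Z s * Z * spdPow Z t = spdPow Z s * spdPow Z 1 * spdPow Z t := by
        rw [spdPow_one' hZ]
    _ = spdPow Z (s + 1) * spdPow Z t := by rw [spdPow_add hZ]
    _ = spdPow Z (s + 1 + t) := spdPow_add hZ _ _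

theorem sandwich_one {Z : Matrix (Fin D) (Fin D) ℝ} (hZ : Z.PosDef) :
    spdPow Z (-(1:ℝ)/2) * Z * spdPow Z (-(1:ℝ)/2) = 1 := by
  rw [spdPow_mul_base_mul hZ, show -(1:ℝ)/2 + 1 + -(1:ℝ)/2 = 0 by norm_num, spdPow_zero' hZ]

theorem half_sandwich {X : Matrix (Fin D) (Fin D) ℝ} (hX : X.PosDef)
    (Y : Matrix (Fin D) (Fin D) ℝ) :
    spdPow X ((1:ℝ)/2) * (spdPow X (-(1:ℝ)/2) * Y * spdPow X (-(1:ℝ)/2)) *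
      spdPow X ((1:ℝ)/2) = Y := by
  have h1 : spdPow X ((1:ℝ)/2) * spdPow X (-(1:ℝ)/2) = 1 := by
    rw [spdPow_add hX, show (1:ℝ)/2 + -(1:ℝ)/2 = 0 by norm_num, spdPow_zero' hX]
  have h2 : spdPow X (-(1:ℝ)/2) * spdPow X ((1:ℝ)/2) = 1 := by
    rw [spdPow_add hX, show -(1:ℝ)/2 + (1:ℝ)/2 = 0 by norm_num, spdPow_zero' hX]
  calc spdPow X ((1:ℝ)/2) * (spdPow X (-(1:ℝ)/2) * Y * spdPow X (-(1:ℝ)/2)) *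
      spdPow X ((1:ℝ)/2)
      = (spdPow X ((1:ℝ)/2) * spdPow X (-(1:ℝ)/2)) * Y *
        (spdPow X (-(1:ℝ)/2) * spdPow X ((1:ℝ)/2)) := by
        simp only [Matrix.mul_assoc]
    _ = Y := by rw [h1, h2, Matrix.one_mul, Matrix.mul_one]

theorem trace_rep {A : Matrix (Fin D) (Fin D) ℝ} {V d} (h : IsRep A V d) :
    Matrix.trace A = ∑ i, d i := by
  rw [h, Matrix.trace_mul_comm, cancel_left (umul' V), Matrix.trace_diagonal]

theorem frobNorm_nonneg (A : Matrix (Fin D) (Fin D) ℝ) : 0 ≤ frobNorm A :=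
  Real.sqrt_nonneg _

theorem frobNorm_sq (A : Matrix (Fin D) (Fin D) ℝ) :
    frobNorm A ^ 2 = ∑ i, ∑ j, (A i j) ^ 2 := Real.sq_sqrt (by positivity)

theorem frob_sq_rep {A : Matrix (Fin D) (Fin D) ℝ} {V d} (h : IsRep A V d) :
    frobNorm A ^ 2 = ∑ i, (d i) ^ 2 := by
  have hsym : ∀ i j, A j i = A i j := fun i j => by
    have := h.isHermitian.apply i j
    simpa using this
  have h2 : ∑ i, ∑ j, (A i j) ^ 2 = Matrix.trace (A * A) := by
    rw [Matrix.trace]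
    apply Finset.sum_congr rfl
    intro i _
    rw [Matrix.diag_apply, Matrix.mul_apply]
    apply Finset.sum_congr rfl
    intro j _
    rw [hsym i j, pow_two]
  have h3 : Matrix.trace (A * A) = ∑ i, d i * d i := trace_rep (h.mul h)
  rw [frobNorm_sq, h2, h3]
  exact Finset.sum_congr rfl (fun i _ => (pow_two _).symm)

theorem trace_conj {P Q M : Matrix (Fin D) (Fin D) ℝ} (h : P * Q = 1) :
    Matrix.trace (P * M * Q) = Matrix.trace M := by
  rw [Matrix.trace_mul_comm, cancel_left (mul_eq_one_comm.mp h)]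

theorem trace_mul_rep {A B : Matrix (Fin D) (Fin D) ℝ} {V W a b}
    (hA : IsRep A V a) (hB : IsRep B W b) :
    Matrix.trace (A * B) = ∑ i, ∑ j, a i * b j *
      ((star (V : Matrix (Fin D) (Fin D) ℝ) * (W : Matrix (Fin D) (Fin D) ℝ)) i j) ^ 2 := by
  set K : Matrix (Fin D) (Fin D) ℝ :=
    star (V : Matrix (Fin D) (Fin D) ℝ) * (W : Matrix (Fin D) (Fin D) ℝ) with hK
  have h1 := umul V
  have hABmat : A * B = (V : Matrix (Fin D) (Fin D) ℝ) *
      (Matrix.diagonal a * K * Matrix.diagonal b * star K) *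
      star (V : Matrix (Fin D) (Fin D) ℝ) := by
    rw [hA, hB, hK]
    simp only [Matrix.star_mul, star_star, Matrix.mul_assoc, h1, Matrix.mul_one]
  rw [hABmat, trace_conj h1, Matrix.trace]
  apply Finset.sum_congr rfl
  intro i _
  rw [Matrix.diag_apply, Matrix.mul_apply]
  apply Finset.sum_congr rfl
  intro j _
  rw [Matrix.mul_diagonal, Matrix.diagonal_mul, Matrix.star_apply]
  simp only [star_trivial]
  ring

theorem row_sum_sq (V W : Matrix.unitaryGroup (Fin D) ℝ) (i : Fin D) :
    ∑ j, ((star (V : Matrix (Fin D) (Fin D) ℝ) * (W : Matrix (Fin D) (Fin D) ℝ)) i j) ^ 2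
      = 1 := by
  set K : Matrix (Fin D) (Fin D) ℝ :=
    star (V : Matrix (Fin D) (Fin D) ℝ) * (W : Matrix (Fin D) (Fin D) ℝ) with hK
  have h1 : K * star K = 1 := by
    rw [hK]
    calc star (V : Matrix (Fin D) (Fin D) ℝ) * (W : Matrix (Fin D) (Fin D) ℝ) *
        star (star (V : Matrix (Fin D) (Fin D) ℝ) * (W : Matrix (Fin D) (Fin D) ℝ))
        = star (V : Matrix (Fin D) (Fin D) ℝ) *
          ((W : Matrix (Fin D) (Fin D) ℝ) * (star (W : Matrix (Fin D) (Fin D) ℝ) *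
            (V : Matrix (Fin D) (Fin D) ℝ))) := by
          simp only [Matrix.star_mul, star_star, Matrix.mul_assoc]
      _ = 1 := by rw [cancel_left (umul W), umul' V]
  have h2 : (K * star K) i i = (1 : Matrix (Fin D) (Fin D) ℝ) i i := by rw [h1]
  rw [Matrix.mul_apply, Matrix.one_apply_eq] at h2
  rw [← h2]
  apply Finset.sum_congr rfl
  intro j _
  rw [Matrix.star_apply]
  simp only [star_trivial]
  ring

theorem col_sum_sq (V W : Matrix.unitaryGroup (Fin D) ℝ) (j : Fin D) :
    ∑ i, ((star (V : Matrix (Fin D) (Fin D) ℝ) * (W : Matrix (Fin D) (Fin D) ℝ)) i j) ^ 2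
      = 1 := by
  set K : Matrix (Fin D) (Fin D) ℝ :=
    star (V : Matrix (Fin D) (Fin D) ℝ) * (W : Matrix (Fin D) (Fin D) ℝ) with hK
  have h1 : star K * K = 1 := by
    rw [hK]
    calc star (star (V : Matrix (Fin D) (Fin D) ℝ) * (W : Matrix (Fin D) (Fin D) ℝ)) *
        (star (V : Matrix (Fin D) (Fin D) ℝ) * (W : Matrix (Fin D) (Fin D) ℝ))
        = star (W : Matrix (Fin D) (Fin D) ℝ) *
          ((V : Matrix (Fin D) (Fin D) ℝ) * (star (V : Matrix (Fin D) (Fin D) ℝ) *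
            (W : Matrix (Fin D) (Fin D) ℝ))) := by
          simp only [Matrix.star_mul, star_star, Matrix.mul_assoc]
      _ = 1 := by rw [cancel_left (umul V), umul' W]
  have h2 : (star K * K) j j = (1 : Matrix (Fin D) (Fin D) ℝ) j j := by rw [h1]
  rw [Matrix.mul_apply, Matrix.one_apply_eq] at h2
  rw [← h2]
  apply Finset.sum_congr rfl
  intro i _
  rw [Matrix.star_apply]
  simp only [star_trivial]
  ring

theorem airm_sq {X Y : Matrix (Fin D) (Fin D) ℝ} {W m}
    (hN : IsRep (spdPow X (-(1:ℝ)/2) * Y * spdPow X (-(1:ℝ)/2)) W m) :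
    airm X Y ^ 2 = ∑ i, Real.log (m i) ^ 2 := by
  unfold airm
  exact frob_sq_rep hN.spdLog

theorem airm_nonneg (X Y : Matrix (Fin D) (Fin D) ℝ) : 0 ≤ airm X Y :=
  Real.sqrt_nonneg _

theorem IsRep.congr {Z : Matrix (Fin D) (Fin D) ℝ} {V f g} (h : IsRep Z V f)
    (hfg : ∀ i, f i = g i) : IsRep Z V g := by
  rw [IsRep, ← show f = g from funext hfg]; exact h

theorem mul_head {A B E : Matrix (Fin D) (Fin D) ℝ} (h : A * B = E)
    (T : Matrix (Fin D) (Fin D) ℝ) : A * (B * T) = E * T := by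
  rw [← Matrix.mul_assoc, h]

/-- Congruence invariance of the AIRM distance. -/
theorem airm_conj_sq {X Y C : Matrix (Fin D) (Fin D) ℝ}
    (hX : X.PosDef) (hY : Y.PosDef) (hC : C.PosDef) :
    airm (C * X * C) (C * Y * C) ^ 2 = airm X Y ^ 2 := by
  have hZ'pd : (C * X * C).PosDef := posDef_conj hX hC
  have hCYC : (C * Y * C).PosDef := posDef_conj hY hC
  set Xh := spdPow X (-(1:ℝ)/2) with hXh
  set H := spdPow X ((1:ℝ)/2) with hH
  set R := spdPow (C * X * C) (-(1:ℝ)/2) with hR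
  have hRpd : R.PosDef := spdPow_posDef hZ'pd _
  have hXhpd : Xh.PosDef := spdPow_posDef hX _
  set N' := R * (C * Y * C) * R with hN'
  set N := Xh * Y * Xh with hN
  have hN'pd : N'.PosDef := posDef_conj hCYC hRpd
  have hNpd : N.PosDef := posDef_conj hY hXhpd
  set P := R * (C * H) with hP
  set Q := (H * C) * R with hQ
  have hHH : H * H = X := by
    rw [hH, spdPow_add hX, show (1:ℝ)/2 + (1:ℝ)/2 = 1 by norm_num, spdPow_one' hX]
  have hHXh : H * Xh = 1 := by
    rw [hH, hXh, spdPow_add hX, show (1:ℝ)/2 + -(1:ℝ)/2 = 0 by norm_num, spdPow_zero' hX]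
  have hXhH : Xh * H = 1 := by
    rw [hH, hXh, spdPow_add hX, show -(1:ℝ)/2 + (1:ℝ)/2 = 0 by norm_num, spdPow_zero' hX]
  have hPQ : P * Q = 1 := by
    rw [hP, hQ]
    calc R * (C * H) * (H * C * R) = R * (C * (H * (H * (C * R)))) := by
          simp only [Matrix.mul_assoc]
      _ = R * (C * (X * (C * R))) := by rw [mul_head hHH]
      _ = R * (C * X * C) * R := by simp only [Matrix.mul_assoc]
      _ = 1 := by rw [hR]; exact sandwich_one hZ'pd
  have hN'eq : N' = P * N * Q := by
    rw [hN', hP, hQ, hN]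
    calc R * (C * Y * C) * R
        = R * (C * (Y * (C * R))) := by simp only [Matrix.mul_assoc]
      _ = R * (C * H) * (Xh * Y * Xh) * (H * C * R) := by
          simp only [Matrix.mul_assoc]
          rw [mul_head hHXh, mul_head hXhH, Matrix.one_mul, Matrix.one_mul]
  have hchar : N'.charpoly = N.charpoly := by rw [hN'eq, charpoly_conj hPQ]
  have repN' := PosDef.rep hN'pd
  have repN := PosDef.rep hNpd
  have hsum := IsRep.sum_f_eq repN repN' hchar (fun t => Real.log t ^ 2)
  have e1 : airm (C * X * C) (C * Y * C) ^ 2 = ∑ i, Real.log (hN'pd.1.eigenvalues i) ^ 2 := by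
    apply airm_sq
    rw [← hR, ← hN']
    exact repN'
  have e2 : airm X Y ^ 2 = ∑ i, Real.log (hNpd.1.eigenvalues i) ^ 2 := by
    apply airm_sq
    rw [← hXh, ← hN]
    exact repN
  rw [e1, e2]
  exact hsum

/-- Distance between two powers of the same SPD matrix. -/
theorem airm_pow_sq {M : Matrix (Fin D) (Fin D) ℝ} (hM : M.PosDef) (s t : ℝ) :
    airm (spdPow M s) (spdPow M t) ^ 2 =
      (t - s) ^ 2 * ∑ i, Real.log (hM.1.eigenvalues i) ^ 2 := by
  have hrep := PosDef.rep hM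
  have hμ : ∀ i, 0 < hM.1.eigenvalues i := hM.eigenvalues_pos
  have h2 := ((hrep.spdPow s).spdPow (-(1:ℝ)/2)).mul
    ((hrep.spdPow t).mul ((hrep.spdPow s).spdPow (-(1:ℝ)/2)))
  have h2' : IsRep (spdPow (spdPow M s) (-(1:ℝ)/2) * spdPow M t * spdPow (spdPow M s) (-(1:ℝ)/2))
      hM.1.eigenvectorUnitary (fun i => hM.1.eigenvalues i ^ (t - s)) := by
    have h3 := h2.congr (g := fun i => hM.1.eigenvalues i ^ (t - s)) (fun i => by
      rw [← Real.rpow_mul (le_of_lt (hμ i)), ← Real.rpow_add (hμ i),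
        ← Real.rpow_add (hμ i)]
      congr 1
      ring)
    rw [← Matrix.mul_assoc] at h3
    exact h3
  rw [airm_sq h2']
  rw [show ∀ (c : ℝ), (∑ i, Real.log (hM.1.eigenvalues i ^ c) ^ 2) =
      ∑ i, c ^ 2 * Real.log (hM.1.eigenvalues i) ^ 2 from fun c =>
      Finset.sum_congr rfl (fun i _ => by rw [Real.log_rpow (hμ i), mul_pow]),
    ← Finset.mul_sum]

theorem geo_posDef {X Y : Matrix (Fin D) (Fin D) ℝ} (hX : X.PosDef) (hY : Y.PosDef) (a : ℝ) :
    (spdPow X ((1:ℝ)/2) *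
      spdPow (spdPow X (-(1:ℝ)/2) * Y * spdPow X (-(1:ℝ)/2)) a *
      spdPow X ((1:ℝ)/2)).PosDef :=
  posDef_conj (spdPow_posDef (posDef_conj hY (spdPow_posDef hX _)) a) (spdPow_posDef hX _)

theorem airm_geo_sq {X Y : Matrix (Fin D) (Fin D) ℝ} (hX : X.PosDef) (hY : Y.PosDef)
    (a b : ℝ) :
    airm (spdPow X ((1:ℝ)/2) *
        spdPow (spdPow X (-(1:ℝ)/2) * Y * spdPow X (-(1:ℝ)/2)) a * spdPow X ((1:ℝ)/2))
      (spdPow X ((1:ℝ)/2) *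
        spdPow (spdPow X (-(1:ℝ)/2) * Y * spdPow X (-(1:ℝ)/2)) b * spdPow X ((1:ℝ)/2)) ^ 2
      = (b - a) ^ 2 * airm X Y ^ 2 := by
  have hNpd : (spdPow X (-(1:ℝ)/2) * Y * spdPow X (-(1:ℝ)/2)).PosDef :=
    posDef_conj hY (spdPow_posDef hX _)
  have hCpd : (spdPow X (-(1:ℝ)/2)).PosDef := spdPow_posDef hX _
  have hCH : spdPow X (-(1:ℝ)/2) * spdPow X ((1:ℝ)/2) = 1 := by
    rw [spdPow_add hX, show -(1:ℝ)/2 + (1:ℝ)/2 = 0 by norm_num, spdPow_zero' hX]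
  have hHC : spdPow X ((1:ℝ)/2) * spdPow X (-(1:ℝ)/2) = 1 := by
    rw [spdPow_add hX, show (1:ℝ)/2 + -(1:ℝ)/2 = 0 by norm_num, spdPow_zero' hX]
  have collapse : ∀ T : Matrix (Fin D) (Fin D) ℝ,
      spdPow X (-(1:ℝ)/2) * (spdPow X ((1:ℝ)/2) * T * spdPow X ((1:ℝ)/2)) *
        spdPow X (-(1:ℝ)/2) = T := by
    intro T
    calc spdPow X (-(1:ℝ)/2) * (spdPow X ((1:ℝ)/2) * T * spdPow X ((1:ℝ)/2)) *
        spdPow X (-(1:ℝ)/2)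
        = spdPow X (-(1:ℝ)/2) * (spdPow X ((1:ℝ)/2) *
            (T * (spdPow X ((1:ℝ)/2) * spdPow X (-(1:ℝ)/2)))) := by
          simp only [Matrix.mul_assoc]
      _ = T := by rw [hHC, Matrix.mul_one, cancel_left hCH]
  have h1 := airm_conj_sq (geo_posDef hX hY a) (geo_posDef hX hY b) hCpd
  rw [collapse, collapse] at h1
  rw [← h1, airm_pow_sq hNpd a b]
  congr 1
  exact (airm_sq (PosDef.rep hNpd)).symm

theorem geo_zero {X Y : Matrix (Fin D) (Fin D) ℝ} (hX : X.PosDef) (hY : Y.PosDef) :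
    spdPow X ((1:ℝ)/2) * spdPow (spdPow X (-(1:ℝ)/2) * Y * spdPow X (-(1:ℝ)/2)) 0 *
      spdPow X ((1:ℝ)/2) = X := by
  have hNpd : (spdPow X (-(1:ℝ)/2) * Y * spdPow X (-(1:ℝ)/2)).PosDef :=
    posDef_conj hY (spdPow_posDef hX _)
  rw [spdPow_zero' hNpd, Matrix.mul_one, spdPow_add hX,
    show (1:ℝ)/2 + (1:ℝ)/2 = 1 by norm_num, spdPow_one' hX]

theorem geo_one {X Y : Matrix (Fin D) (Fin D) ℝ} (hX : X.PosDef) (hY : Y.PosDef) :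
    spdPow X ((1:ℝ)/2) * spdPow (spdPow X (-(1:ℝ)/2) * Y * spdPow X (-(1:ℝ)/2)) 1 *
      spdPow X ((1:ℝ)/2) = Y := by
  have hNpd : (spdPow X (-(1:ℝ)/2) * Y * spdPow X (-(1:ℝ)/2)).PosDef :=
    posDef_conj hY (spdPow_posDef hX _)
  rw [spdPow_one' hNpd]
  exact half_sandwich hX Y

/-- Embedding of matrices into Euclidean space carrying the Frobenius norm. -/
noncomputable def emb (A : Matrix (Fin D) (Fin D) ℝ) : EuclideanSpace ℝ (Fin D × Fin D) :=
  (WithLp.equiv 2 ((Fin D × Fin D) → ℝ)).symm (fun p => A p.1 p.2)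

theorem emb_norm (A : Matrix (Fin D) (Fin D) ℝ) : ‖emb A‖ = frobNorm A := by
  rw [EuclideanSpace.norm_eq, frobNorm]
  congr 1
  rw [Fintype.sum_prod_type]
  apply Finset.sum_congr rfl
  intro i _
  apply Finset.sum_congr rfl
  intro j _
  rw [show (emb A) (i, j) = A i j from rfl, Real.norm_eq_abs, sq_abs]

theorem emb_sub (A B : Matrix (Fin D) (Fin D) ℝ) : emb (A - B) = emb A - emb B := by
  rw [emb, emb, emb, show (fun p : Fin D × Fin D => (A - B) p.1 p.2) =
    (fun p : Fin D × Fin D => A p.1 p.2) - (fun p : Fin D × Fin D => B p.1 p.2) from by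
      funext p; simp [Matrix.sub_apply]]
  exact WithLp.toLp_sub (p := 2) _ _

theorem norm_telescope (g : ℕ → EuclideanSpace ℝ (Fin D × Fin D)) (m : ℕ) :
    ‖g 0 - g m‖ ≤ ∑ k ∈ Finset.range m, ‖g k - g (k + 1)‖ := by
  induction m with
  | zero => simp
  | succ n ih =>
    have h1 : ‖g 0 - g (n + 1)‖ ≤ ‖g 0 - g n‖ + ‖g n - g (n + 1)‖ := by
      have := dist_triangle (g 0) (g n) (g (n + 1))
      simpa [dist_eq_norm] using this
    rw [Finset.sum_range_succ]
    linarith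

theorem frobNorm_sub_comm (A B : Matrix (Fin D) (Fin D) ℝ) :
    frobNorm (A - B) = frobNorm (B - A) := by
  rw [frobNorm, frobNorm]
  congr 1
  apply Finset.sum_congr rfl
  intro i _
  apply Finset.sum_congr rfl
  intro j _
  rw [Matrix.sub_apply, Matrix.sub_apply]
  ring

theorem frob_sq_trace (M : Matrix (Fin D) (Fin D) ℝ) :
    frobNorm M ^ 2 = Matrix.trace (star M * M) := by
  rw [frobNorm_sq, Matrix.trace, Finset.sum_comm]
  apply Finset.sum_congr rfl
  intro j _
  rw [Matrix.diag_apply, Matrix.mul_apply]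
  apply Finset.sum_congr rfl
  intro i _
  rw [Matrix.star_apply]
  simp only [star_trivial]
  ring

theorem frob_sq_conj (V W : Matrix.unitaryGroup (Fin D) ℝ) (M : Matrix (Fin D) (Fin D) ℝ) :
    frobNorm (star (V : Matrix (Fin D) (Fin D) ℝ) * M * (W : Matrix (Fin D) (Fin D) ℝ)) ^ 2
      = frobNorm M ^ 2 := by
  rw [frob_sq_trace, frob_sq_trace]
  have h1 : star (star (V : Matrix (Fin D) (Fin D) ℝ) * M * (W : Matrix (Fin D) (Fin D) ℝ)) *
      (star (V : Matrix (Fin D) (Fin D) ℝ) * M * (W : Matrix (Fin D) (Fin D) ℝ)) =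
      star (W : Matrix (Fin D) (Fin D) ℝ) * (star M * M) * (W : Matrix (Fin D) (Fin D) ℝ) := by
    have h2 := umul V
    simp only [Matrix.star_mul, star_star, Matrix.mul_assoc]
    rw [cancel_left h2]
  rw [h1, trace_conj (umul' W)]

theorem frob_diff_sq {A B : Matrix (Fin D) (Fin D) ℝ} {V W a b}
    (hA : IsRep A V a) (hB : IsRep B W b) :
    frobNorm (A - B) ^ 2 = ∑ i, ∑ j, (a i - b j) ^ 2 *
      ((star (V : Matrix (Fin D) (Fin D) ℝ) * (W : Matrix (Fin D) (Fin D) ℝ)) i j) ^ 2 := by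
  have h1 : star (V : Matrix (Fin D) (Fin D) ℝ) * (A - B) * (W : Matrix (Fin D) (Fin D) ℝ)
      = Matrix.diagonal a * (star (V : Matrix (Fin D) (Fin D) ℝ) * (W : Matrix (Fin D) (Fin D) ℝ))
        - (star (V : Matrix (Fin D) (Fin D) ℝ) * (W : Matrix (Fin D) (Fin D) ℝ)) *
          Matrix.diagonal b := by
    rw [Matrix.mul_sub, Matrix.sub_mul, hA, hB]
    congr 1
    · simp only [Matrix.mul_assoc]
      rw [cancel_left (umul' V)]
    · simp only [Matrix.mul_assoc]
      rw [umul' W, Matrix.mul_one]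
  have h2 := frob_sq_conj V W (A - B)
  rw [h1] at h2
  rw [← h2, frobNorm_sq]
  apply Finset.sum_congr rfl
  intro i _
  apply Finset.sum_congr rfl
  intro j _
  rw [Matrix.sub_apply, Matrix.diagonal_mul, Matrix.mul_diagonal]
  ring

theorem log_diff_sq_le {x y : ℝ} (hx : 0 < x) (hy : 0 < y) :
    (Real.log x - Real.log y) ^ 2 ≤ x * y⁻¹ + x⁻¹ * y - 2 := by
  have h := sq_le_exp_add (Real.log x - Real.log y)
  have h1 : Real.exp (Real.log x - Real.log y) = x * y⁻¹ := by
    rw [Real.exp_sub, Real.exp_log hx, Real.exp_log hy, div_eq_mul_inv]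
  have h2 : Real.exp (-(Real.log x - Real.log y)) = x⁻¹ * y := by
    rw [neg_sub, Real.exp_sub, Real.exp_log hx, Real.exp_log hy, div_eq_mul_inv, mul_comm]
  rw [h1, h2] at h
  linarith

/-- The key "exponential metric increasing" core inequality. -/
theorem core1 {Q R : Matrix (Fin D) (Fin D) ℝ} (hQ : Q.PosDef) (hR : R.PosDef) :
    frobNorm (spdLog Q - spdLog R) ^ 2 ≤
      Matrix.trace (Q * spdPow R (-1:ℝ)) + Matrix.trace (spdPow Q (-1:ℝ) * R)
        - 2 * (D : ℝ) := by
  have repQ := PosDef.rep hQ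
  have repR := PosDef.rep hR
  have hq : ∀ i, 0 < hQ.1.eigenvalues i := hQ.eigenvalues_pos
  have hr : ∀ i, 0 < hR.1.eigenvalues i := hR.eigenvalues_pos
  have hLHS := frob_diff_sq repQ.spdLog repR.spdLog
  have hT1 : Matrix.trace (Q * spdPow R (-1:ℝ)) =
      ∑ i, ∑ j, hQ.1.eigenvalues i * (hR.1.eigenvalues j)⁻¹ *
        ((star (hQ.1.eigenvectorUnitary : Matrix (Fin D) (Fin D) ℝ) *
          (hR.1.eigenvectorUnitary : Matrix (Fin D) (Fin D) ℝ)) i j) ^ 2 := by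
    rw [trace_mul_rep repQ (repR.spdPow (-1:ℝ))]
    apply Finset.sum_congr rfl; intro i _
    apply Finset.sum_congr rfl; intro j _
    rw [Real.rpow_neg_one]
  have hT2 : Matrix.trace (spdPow Q (-1:ℝ) * R) =
      ∑ i, ∑ j, (hQ.1.eigenvalues i)⁻¹ * hR.1.eigenvalues j *
        ((star (hQ.1.eigenvectorUnitary : Matrix (Fin D) (Fin D) ℝ) *
          (hR.1.eigenvectorUnitary : Matrix (Fin D) (Fin D) ℝ)) i j) ^ 2 := by
    rw [trace_mul_rep (repQ.spdPow (-1:ℝ)) repR]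
    apply Finset.sum_congr rfl; intro i _
    apply Finset.sum_congr rfl; intro j _
    rw [Real.rpow_neg_one]
  have hD : 2 * (D : ℝ) =
      ∑ i, ∑ j, 2 * ((star (hQ.1.eigenvectorUnitary : Matrix (Fin D) (Fin D) ℝ) *
          (hR.1.eigenvectorUnitary : Matrix (Fin D) (Fin D) ℝ)) i j) ^ 2 := by
    have h1 : ∀ i : Fin D, ∑ j, 2 * ((star (hQ.1.eigenvectorUnitary : Matrix (Fin D) (Fin D) ℝ) *
        (hR.1.eigenvectorUnitary : Matrix (Fin D) (Fin D) ℝ)) i j) ^ 2 = 2 := by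
      intro i
      rw [← Finset.mul_sum, row_sum_sq hQ.1.eigenvectorUnitary hR.1.eigenvectorUnitary i,
        mul_one]
    rw [Finset.sum_congr rfl (fun i _ => h1 i), Finset.sum_const, Finset.card_univ]
    simp [mul_comm]
  rw [hLHS, hT1, hT2, hD]
  rw [← Finset.sum_add_distrib, ← Finset.sum_sub_distrib]
  apply Finset.sum_le_sum
  intro i _
  rw [← Finset.sum_add_distrib, ← Finset.sum_sub_distrib]
  apply Finset.sum_le_sum
  intro j _
  have hscal := log_diff_sq_le (hq i) (hr j)
  have hk2 : (0:ℝ) ≤ ((star (hQ.1.eigenvectorUnitary : Matrix (Fin D) (Fin D) ℝ) *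
      (hR.1.eigenvectorUnitary : Matrix (Fin D) (Fin D) ℝ)) i j) ^ 2 := sq_nonneg _
  nlinarith [mul_le_mul_of_nonneg_right hscal hk2]

theorem base_mul_pow {Z : Matrix (Fin D) (Fin D) ℝ} (hZ : Z.PosDef) (t : ℝ) :
    Z * spdPow Z t = spdPow Z (1 + t) := by
  calc Z * spdPow Z t = spdPow Z 1 * spdPow Z t := by rw [spdPow_one' hZ]
    _ = spdPow Z (1 + t) := spdPow_add hZ _ _

theorem pow_mul_base {Z : Matrix (Fin D) (Fin D) ℝ} (hZ : Z.PosDef) (t : ℝ) :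
    spdPow Z t * Z = spdPow Z (t + 1) := by
  calc spdPow Z t * Z = spdPow Z t * spdPow Z 1 := by rw [spdPow_one' hZ]
    _ = spdPow Z (t + 1) := spdPow_add hZ _ _

theorem star_bound {Q R : Matrix (Fin D) (Fin D) ℝ} (hQ : Q.PosDef) (hR : R.PosDef) :
    frobNorm (spdLog Q - spdLog R) ≤ airm R Q * Real.exp (airm R Q / 2) := by
  set N := spdPow R (-(1:ℝ)/2) * Q * spdPow R (-(1:ℝ)/2) with hN
  have hNpd : N.PosDef := posDef_conj hQ (spdPow_posDef hR _)
  set ν := hNpd.1.eigenvalues with hν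
  have hνpos : ∀ i, 0 < ν i := hNpd.eigenvalues_pos
  have hs2 : airm R Q ^ 2 = ∑ i, Real.log (ν i) ^ 2 := by
    apply airm_sq
    rw [← hN]
    exact PosDef.rep hNpd
  have hsnn : 0 ≤ airm R Q := airm_nonneg _ _
  have hbd : ∀ i, |Real.log (ν i)| ≤ airm R Q := by
    intro i
    have h1 : Real.log (ν i) ^ 2 ≤ airm R Q ^ 2 := by
      rw [hs2]
      exact Finset.single_le_sum (f := fun i => Real.log (ν i) ^ 2)
        (fun i _ => sq_nonneg _) (Finset.mem_univ i)
    calc |Real.log (ν i)| = Real.sqrt (Real.log (ν i) ^ 2) := (Real.sqrt_sq_eq_abs _).symm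
      _ ≤ Real.sqrt (airm R Q ^ 2) := Real.sqrt_le_sqrt h1
      _ = airm R Q := Real.sqrt_sq hsnn
  have hRhH : spdPow R (-(1:ℝ)/2) * spdPow R ((1:ℝ)/2) = 1 := by
    rw [spdPow_add hR, show -(1:ℝ)/2 + (1:ℝ)/2 = 0 by norm_num, spdPow_zero' hR]
  have htr1 : Matrix.trace (Q * spdPow R (-1:ℝ)) = ∑ i, ν i := by
    have e1 : Q * spdPow R (-1:ℝ) = Q * (spdPow R (-(1:ℝ)/2) * spdPow R (-(1:ℝ)/2)) := by
      rw [spdPow_add hR, show -(1:ℝ)/2 + -(1:ℝ)/2 = -1 by norm_num]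
    rw [e1, ← Matrix.mul_assoc, Matrix.trace_mul_comm, ← Matrix.mul_assoc, ← hN]
    exact trace_rep (PosDef.rep hNpd)
  have htr2 : Matrix.trace (spdPow Q (-1:ℝ) * R) = ∑ i, (ν i)⁻¹ := by
    have hQQinv : Q * spdPow Q (-1:ℝ) = 1 := by
      rw [base_mul_pow hQ, show (1:ℝ) + -1 = 0 by norm_num, spdPow_zero' hQ]
    have hNB : N * (spdPow R ((1:ℝ)/2) * spdPow Q (-1:ℝ) * spdPow R ((1:ℝ)/2)) = 1 := by
      rw [hN]
      calc spdPow R (-(1:ℝ)/2) * Q * spdPow R (-(1:ℝ)/2) *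
          (spdPow R ((1:ℝ)/2) * spdPow Q (-1:ℝ) * spdPow R ((1:ℝ)/2))
          = spdPow R (-(1:ℝ)/2) * (Q * (spdPow R (-(1:ℝ)/2) * (spdPow R ((1:ℝ)/2) *
              (spdPow Q (-1:ℝ) * spdPow R ((1:ℝ)/2))))) := by
            simp only [Matrix.mul_assoc]
        _ = spdPow R (-(1:ℝ)/2) * (Q * (spdPow Q (-1:ℝ) * spdPow R ((1:ℝ)/2))) := by
            rw [cancel_left hRhH]
        _ = spdPow R (-(1:ℝ)/2) * ((Q * spdPow Q (-1:ℝ)) * spdPow R ((1:ℝ)/2)) := by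
            simp only [Matrix.mul_assoc]
        _ = 1 := by rw [hQQinv, Matrix.one_mul, hRhH]
    have hpowN : spdPow N (-1:ℝ) * N = 1 := by
      rw [pow_mul_base hNpd, show (-1:ℝ) + 1 = 0 by norm_num, spdPow_zero' hNpd]
    have huniq : spdPow N (-1:ℝ) =
        spdPow R ((1:ℝ)/2) * spdPow Q (-1:ℝ) * spdPow R ((1:ℝ)/2) := by
      calc spdPow N (-1:ℝ)
          = spdPow N (-1:ℝ) * (N * (spdPow R ((1:ℝ)/2) * spdPow Q (-1:ℝ) *
              spdPow R ((1:ℝ)/2))) := by rw [hNB, Matrix.mul_one]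
        _ = (spdPow N (-1:ℝ) * N) * (spdPow R ((1:ℝ)/2) * spdPow Q (-1:ℝ) *
              spdPow R ((1:ℝ)/2)) := (Matrix.mul_assoc _ _ _).symm
        _ = _ := by rw [hpowN, Matrix.one_mul]
    have e2 : Matrix.trace (spdPow R ((1:ℝ)/2) * spdPow Q (-1:ℝ) * spdPow R ((1:ℝ)/2)) =
        Matrix.trace (spdPow Q (-1:ℝ) * R) := by
      rw [Matrix.trace_mul_comm, ← Matrix.mul_assoc, spdPow_add hR,
        show (1:ℝ)/2 + (1:ℝ)/2 = 1 by norm_num, spdPow_one' hR, Matrix.trace_mul_comm]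
    rw [← e2, ← huniq]
    have h3 := trace_rep ((PosDef.rep hNpd).spdPow (-1:ℝ))
    rw [h3]
    exact Finset.sum_congr rfl (fun i _ => Real.rpow_neg_one _)
  have hcore := core1 hQ hR
  have hsum : (∑ i, ν i) + (∑ i, (ν i)⁻¹) - 2 * (D:ℝ) ≤
      Real.exp (airm R Q) * airm R Q ^ 2 := by
    have h4 : ∀ i, ν i + (ν i)⁻¹ - 2 ≤ Real.log (ν i) ^ 2 * Real.exp (airm R Q) := by
      intro i
      have h5 := exp_add_sub_two_le' (Real.log (ν i))
      rw [Real.exp_log (hνpos i)] at h5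
      have h6 : Real.exp (-Real.log (ν i)) = (ν i)⁻¹ := by
        rw [Real.exp_neg, Real.exp_log (hνpos i)]
      rw [h6] at h5
      have h7 : Real.exp |Real.log (ν i)| ≤ Real.exp (airm R Q) :=
        Real.exp_le_exp.mpr (hbd i)
      nlinarith [sq_nonneg (Real.log (ν i))]
    calc (∑ i, ν i) + (∑ i, (ν i)⁻¹) - 2 * (D:ℝ)
        = ∑ i, (ν i + (ν i)⁻¹ - 2) := by
          rw [Finset.sum_sub_distrib, Finset.sum_add_distrib]
          simp [Finset.sum_const, Finset.card_univ, mul_comm]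
      _ ≤ ∑ i, Real.log (ν i) ^ 2 * Real.exp (airm R Q) :=
          Finset.sum_le_sum (fun i _ => h4 i)
      _ = Real.exp (airm R Q) * airm R Q ^ 2 := by rw [← Finset.sum_mul, ← hs2]; ring
  have hfr2 : frobNorm (spdLog Q - spdLog R) ^ 2 ≤
      (airm R Q * Real.exp (airm R Q / 2)) ^ 2 := by
    have e3 : (airm R Q * Real.exp (airm R Q / 2)) ^ 2 =
        Real.exp (airm R Q) * airm R Q ^ 2 := by
      rw [mul_pow, pow_two (Real.exp (airm R Q / 2)), ← Real.exp_add,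
        show airm R Q / 2 + airm R Q / 2 = airm R Q by ring]
      ring
    rw [e3]
    calc frobNorm (spdLog Q - spdLog R) ^ 2
        ≤ Matrix.trace (Q * spdPow R (-1:ℝ)) + Matrix.trace (spdPow Q (-1:ℝ) * R)
          - 2 * (D:ℝ) := hcore
      _ = (∑ i, ν i) + (∑ i, (ν i)⁻¹) - 2 * (D:ℝ) := by rw [htr1, htr2]
      _ ≤ Real.exp (airm R Q) * airm R Q ^ 2 := hsum
  have hf := frobNorm_nonneg (spdLog Q - spdLog R)
  have hrhs : 0 ≤ airm R Q * Real.exp (airm R Q / 2) := by positivity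
  calc frobNorm (spdLog Q - spdLog R)
      = Real.sqrt (frobNorm (spdLog Q - spdLog R) ^ 2) := (Real.sqrt_sq hf).symm
    _ ≤ Real.sqrt ((airm R Q * Real.exp (airm R Q / 2)) ^ 2) := Real.sqrt_le_sqrt hfr2
    _ = airm R Q * Real.exp (airm R Q / 2) := Real.sqrt_sq hrhs

/-- Exponential metric increasing property. -/
theorem emi {X Y : Matrix (Fin D) (Fin D) ℝ} (hX : X.PosDef) (hY : Y.PosDef) :
    frobNorm (spdLog X - spdLog Y) ≤ airm X Y := by
  have hsnn : 0 ≤ airm X Y := airm_nonneg _ _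
  set G : ℝ → Matrix (Fin D) (Fin D) ℝ := fun a => spdPow X ((1:ℝ)/2) *
    spdPow (spdPow X (-(1:ℝ)/2) * Y * spdPow X (-(1:ℝ)/2)) a * spdPow X ((1:ℝ)/2) with hG
  have hGpd : ∀ a, (G a).PosDef := fun a => geo_posDef hX hY a
  have hG0 : G 0 = X := geo_zero hX hY
  have hG1 : G 1 = Y := geo_one hX hY
  have hdist : ∀ a b : ℝ, a ≤ b → airm (G a) (G b) = (b - a) * airm X Y := by
    intro a b hab
    have h1 := airm_geo_sq hX hY a b
    have h2 : 0 ≤ airm (G a) (G b) := airm_nonneg _ _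
    have h3 : 0 ≤ (b - a) * airm X Y := mul_nonneg (by linarith) hsnn
    calc airm (G a) (G b) = Real.sqrt (airm (G a) (G b) ^ 2) := (Real.sqrt_sq h2).symm
      _ = Real.sqrt (((b - a) * airm X Y) ^ 2) := by rw [h1, ← mul_pow]
      _ = (b - a) * airm X Y := Real.sqrt_sq h3
  have key : ∀ n k : ℕ,
      frobNorm (spdLog (G (((k:ℝ)+1) / 2 ^ n)) - spdLog (G ((k:ℝ) / 2 ^ n)))
        ≤ (airm X Y / 2 ^ n) * Real.exp ((airm X Y / 2 ^ n) / 2) := by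
    intro n k
    have h2n : (0:ℝ) < 2 ^ n := by positivity
    have hle : (k:ℝ) / 2 ^ n ≤ ((k:ℝ)+1) / 2 ^ n := (div_le_div_iff_of_pos_right h2n).mpr (by linarith)
    have hstep : airm (G ((k:ℝ) / 2 ^ n)) (G (((k:ℝ)+1) / 2 ^ n)) = airm X Y / 2 ^ n := by
      rw [hdist _ _ hle]
      field_simp
      ring
    have hsb := star_bound (hGpd (((k:ℝ)+1) / 2 ^ n)) (hGpd ((k:ℝ) / 2 ^ n))
    rw [hstep] at hsb
    exact hsb
  have htel : ∀ n : ℕ, frobNorm (spdLog X - spdLog Y) ≤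
      airm X Y * Real.exp ((airm X Y / 2 ^ n) / 2) := by
    intro n
    have h2n : (0:ℝ) < 2 ^ n := by positivity
    set gg : ℕ → EuclideanSpace ℝ (Fin D × Fin D) :=
      fun k => emb (spdLog (G ((k:ℝ) / 2 ^ n))) with hgg
    have h0 : gg 0 = emb (spdLog X) := by
      simp only [hgg]
      norm_num [hG0]
    have h1 : gg (2 ^ n) = emb (spdLog Y) := by
      simp only [hgg]
      rw [show (((2:ℕ) ^ n : ℕ) : ℝ) / (2:ℝ) ^ n = 1 from by
        push_cast
        field_simp, hG1]
    have h2 := norm_telescope gg (2 ^ n)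
    rw [h0, h1, ← emb_sub, emb_norm] at h2
    have h3 : ∀ k : ℕ, ‖gg k - gg (k+1)‖ ≤
        (airm X Y / 2 ^ n) * Real.exp ((airm X Y / 2 ^ n) / 2) := by
      intro k
      have e1 : ‖gg k - gg (k+1)‖ =
          frobNorm (spdLog (G ((k:ℝ) / 2 ^ n)) - spdLog (G (((k:ℝ)+1) / 2 ^ n))) := by
        simp only [hgg]
        rw [← emb_sub, emb_norm]
        norm_num
      rw [e1, frobNorm_sub_comm]
      exact key n k
    calc frobNorm (spdLog X - spdLog Y)
        ≤ ∑ k ∈ Finset.range (2 ^ n), ‖gg k - gg (k+1)‖ := h2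
      _ ≤ ∑ _k ∈ Finset.range (2 ^ n),
            (airm X Y / 2 ^ n) * Real.exp ((airm X Y / 2 ^ n) / 2) :=
          Finset.sum_le_sum (fun k _ => h3 k)
      _ = (2 ^ n : ℕ) * ((airm X Y / 2 ^ n) * Real.exp ((airm X Y / 2 ^ n) / 2)) := by
          rw [Finset.sum_const, Finset.card_range, nsmul_eq_mul]
      _ = airm X Y * Real.exp ((airm X Y / 2 ^ n) / 2) := by
          push_cast
          field_simp
  have hlim : Filter.Tendsto (fun n : ℕ => airm X Y * Real.exp ((airm X Y / 2 ^ n) / 2))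
      Filter.atTop (nhds (airm X Y)) := by
    have t0 : Filter.Tendsto (fun n : ℕ => ((1:ℝ)/2) ^ n) Filter.atTop (nhds 0) :=
      tendsto_pow_atTop_nhds_zero_of_lt_one (by norm_num) (by norm_num)
    have t2 := (t0.const_mul (airm X Y)).div_const 2
    simp only [mul_zero, zero_div] at t2
    have t1 : Filter.Tendsto (fun n : ℕ => airm X Y / 2 ^ n / 2) Filter.atTop (nhds 0) := by
      have heq : (fun n : ℕ => airm X Y / 2 ^ n / 2) =
          fun n : ℕ => airm X Y * ((1:ℝ)/2) ^ n / 2 := by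
        funext n
        rw [one_div, inv_pow, div_eq_mul_inv]
        ring
      rw [heq]
      exact t2
    have t3 := (Real.continuous_exp.tendsto 0).comp t1
    rw [Real.exp_zero] at t3
    have t4 := t3.const_mul (airm X Y)
    rw [mul_one] at t4
    exact t4
  exact ge_of_tendsto' hlim htel

theorem quad_ineq {γ : ℝ} (h0 : 0 ≤ γ) (h1 : γ ≤ 1)
    (u v : EuclideanSpace ℝ (Fin D × Fin D)) :
    γ * (1 - γ) * ‖v‖ ^ 2 ≤ (1 - γ) * ‖u‖ ^ 2 + γ * ‖u - v‖ ^ 2 := by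
  have e1 := norm_sub_sq_real u v
  have e2 := norm_sub_sq_real u (γ • v)
  have e3 : ‖γ • v‖ ^ 2 = γ ^ 2 * ‖v‖ ^ 2 := by
    rw [norm_smul, mul_pow, Real.norm_eq_abs, sq_abs]
  rw [real_inner_smul_right, e3] at e2
  have e4 : (0:ℝ) ≤ ‖u - γ • v‖ ^ 2 := sq_nonneg _
  nlinarith [e1, e2, e4]

theorem main_ineq {X Y P : Matrix (Fin D) (Fin D) ℝ} (hX : X.PosDef) (hY : Y.PosDef)
    (hP : P.PosDef) {γ : ℝ} (h0 : 0 ≤ γ) (h1 : γ ≤ 1) :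
    γ * (1 - γ) * airm X Y ^ 2 ≤ (1 - γ) * airm P X ^ 2 + γ * airm P Y ^ 2 := by
  set C := spdPow X (-(1:ℝ)/2) with hC
  have hCpd : C.PosDef := spdPow_posDef hX _
  have hCXC : C * X * C = 1 := sandwich_one hX
  set N := C * Y * C with hN
  set P' := C * P * C with hP'
  have hNpd : N.PosDef := posDef_conj hY hCpd
  have hP'pd : P'.PosDef := posDef_conj hP hCpd
  have h2 : airm P' 1 ^ 2 = airm P X ^ 2 := by
    have h := airm_conj_sq hP hX hCpd
    rw [hCXC, ← hP'] at h
    exact h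
  have h3 : airm P' N ^ 2 = airm P Y ^ 2 := by
    have h := airm_conj_sq hP hY hCpd
    rw [← hP', ← hN] at h
    exact h
  have repP' := PosDef.rep hP'pd
  have hρ : ∀ i, 0 < hP'pd.1.eigenvalues i := hP'pd.eigenvalues_pos
  have repN := PosDef.rep hNpd
  have h4 : airm P' 1 ^ 2 = ∑ i, Real.log (hP'pd.1.eigenvalues i) ^ 2 := by
    have hrepA := ((repP'.spdPow (-(1:ℝ)/2)).mul (IsRep.one _)).mul
      (repP'.spdPow (-(1:ℝ)/2))
    have hrepA' := hrepA.congr (g := fun i => (hP'pd.1.eigenvalues i)⁻¹) (fun i => by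
      rw [mul_one, ← Real.rpow_add (hρ i), show -(1:ℝ)/2 + -(1:ℝ)/2 = -1 by norm_num,
        Real.rpow_neg_one])
    rw [airm_sq hrepA']
    exact Finset.sum_congr rfl (fun i _ => by rw [Real.log_inv, neg_sq])
  have h5 : frobNorm (spdLog P') ^ 2 = ∑ i, Real.log (hP'pd.1.eigenvalues i) ^ 2 :=
    frob_sq_rep repP'.spdLog
  have h6 : airm X Y ^ 2 = ∑ i, Real.log (hNpd.1.eigenvalues i) ^ 2 := by
    apply airm_sq
    rw [← hC, ← hN]
    exact repN
  have h7 : frobNorm (spdLog N) ^ 2 = ∑ i, Real.log (hNpd.1.eigenvalues i) ^ 2 :=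
    frob_sq_rep repN.spdLog
  have hEMI := emi hP'pd hNpd
  have hu : ‖emb (spdLog P')‖ ^ 2 = airm P' 1 ^ 2 := by rw [emb_norm, h5, h4]
  have hv : ‖emb (spdLog N)‖ ^ 2 = airm X Y ^ 2 := by rw [emb_norm, h7, h6]
  have huv : ‖emb (spdLog P') - emb (spdLog N)‖ ^ 2 ≤ airm P' N ^ 2 := by
    rw [← emb_sub, emb_norm]
    exact pow_le_pow_left₀ (frobNorm_nonneg _) hEMI 2
  have hq := quad_ineq h0 h1 (emb (spdLog P')) (emb (spdLog N))
  rw [hu, hv] at hq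
  have h8 : γ * ‖emb (spdLog P') - emb (spdLog N)‖ ^ 2 ≤ γ * airm P' N ^ 2 :=
    mul_le_mul_of_nonneg_left huv h0
  calc γ * (1 - γ) * airm X Y ^ 2
      ≤ (1 - γ) * airm P' 1 ^ 2 + γ * ‖emb (spdLog P') - emb (spdLog N)‖ ^ 2 := hq
    _ ≤ (1 - γ) * airm P' 1 ^ 2 + γ * airm P' N ^ 2 := by linarith
    _ = (1 - γ) * airm P X ^ 2 + γ * airm P Y ^ 2 := by rw [h2, h3]

theorem geo_val1 {X Y : Matrix (Fin D) (Fin D) ℝ} (hX : X.PosDef) (hY : Y.PosDef) (γ : ℝ) :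
    airm (geoMean X Y γ) X ^ 2 = γ ^ 2 * airm X Y ^ 2 := by
  have h1 := airm_geo_sq hX hY γ 0
  rw [geo_zero hX hY] at h1
  rw [show geoMean X Y γ = spdPow X ((1:ℝ)/2) *
    spdPow (spdPow X (-(1:ℝ)/2) * Y * spdPow X (-(1:ℝ)/2)) γ * spdPow X ((1:ℝ)/2) from rfl,
    h1]
  ring

theorem geo_val2 {X Y : Matrix (Fin D) (Fin D) ℝ} (hX : X.PosDef) (hY : Y.PosDef) (γ : ℝ) :
    airm (geoMean X Y γ) Y ^ 2 = (1 - γ) ^ 2 * airm X Y ^ 2 := by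
  have h1 := airm_geo_sq hX hY γ 1
  rw [geo_one hX hY] at h1
  rw [show geoMean X Y γ = spdPow X ((1:ℝ)/2) *
    spdPow (spdPow X (-(1:ℝ)/2) * Y * spdPow X (-(1:ℝ)/2)) γ * spdPow X ((1:ℝ)/2) from rfl,
    h1]

end SPDFM

/-- The weighted geometric mean minimizes the weighted sum of squared AIRM distances;
in particular, for γ = 1/2 it is the Fréchet mean of the two points. -/
theorem geoMean_minimizes_weighted_sq_dist
    (D : ℕ) (hD : 0 < D) (Z₁ Z₂ : Matrix (Fin D) (Fin D) ℝ)
    (hZ₁ : IsSPD Z₁) (hZ₂ : IsSPD Z₂) (γ : ℝ) (hγ : γ ∈ Set.Icc (0:ℝ) 1) :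
    (∀ P : Matrix (Fin D) (Fin D) ℝ, IsSPD P →
        (1 - γ) * airm (geoMean Z₁ Z₂ γ) Z₁ ^ 2 + γ * airm (geoMean Z₁ Z₂ γ) Z₂ ^ 2 ≤
          (1 - γ) * airm P Z₁ ^ 2 + γ * airm P Z₂ ^ 2) ∧
      (∀ P : Matrix (Fin D) (Fin D) ℝ, IsSPD P →
        (1 / 2) * (airm (geoMean Z₁ Z₂ (1 / 2)) Z₁ ^ 2 +
            airm (geoMean Z₁ Z₂ (1 / 2)) Z₂ ^ 2) ≤
          (1 / 2) * (airm P Z₁ ^ 2 + airm P Z₂ ^ 2)) := by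
  obtain ⟨h0, h1⟩ := hγ
  have key : ∀ γ' : ℝ, 0 ≤ γ' → γ' ≤ 1 → ∀ P : Matrix (Fin D) (Fin D) ℝ, IsSPD P →
      (1 - γ') * airm (geoMean Z₁ Z₂ γ') Z₁ ^ 2 + γ' * airm (geoMean Z₁ Z₂ γ') Z₂ ^ 2 ≤
        (1 - γ') * airm P Z₁ ^ 2 + γ' * airm P Z₂ ^ 2 := by
    intro γ' h0' h1' P hP
    have hP' : P.PosDef := hP
    have hZ₁' : Z₁.PosDef := hZ₁
    have hZ₂' : Z₂.PosDef := hZ₂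
    have e1 := SPDFM.geo_val1 hZ₁' hZ₂' γ'
    have e2 := SPDFM.geo_val2 hZ₁' hZ₂' γ'
    have e3 := SPDFM.main_ineq hZ₁' hZ₂' hP' h0' h1'
    rw [e1, e2]
    have e4 : (1 - γ') * (γ' ^ 2 * airm Z₁ Z₂ ^ 2) + γ' * ((1 - γ') ^ 2 * airm Z₁ Z₂ ^ 2)
        = γ' * (1 - γ') * airm Z₁ Z₂ ^ 2 := by ring
    linarith
  refine ⟨fun P hP => key γ h0 h1 P hP, fun P hP => ?_⟩
  have := key (1/2) (by norm_num) (by norm_num) P hP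
  linarith
end
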